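/- Weak duality for the constrained retrieval problem: for any feasible 0-1 assignment x (with Σ_i x_{t,i} = K for each t, group exposures e_g = Σ_t Σ_{i∈I_g} x_{t,i} satisfying e_g ≥ m_g, and Σ_g e_g = TK) and any dual vector μ ∈ R^{|G|}, the primal objective Σ_t Σ_i x_{t,i} r_{t,i} is at most Σ_t Σ_{k=1}^K (r_t − Aμ)_[k] + Σ_g m_g μ_g + (max_g μ_g)(TK − Σ_g m_g). -/

import Mathlib

open Finset

/-- `topK K hK x` is the sum of the `K` largest entries of `x : ℝ^N`,
characterized as the maximum of `∑ i ∈ S, x i` over `K`-element subsets `S`. -/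
noncomputable def topK {N : ℕ} (K : ℕ) (hK : K ≤ N) (x : Fin N → ℝ) : ℝ :=
  ((univ : Finset (Fin N)).powersetCard K).sup'
    (by rw [Finset.powersetCard_nonempty]; simpa using hK)
    (fun S => ∑ i ∈ S, x i)

theorem weak_duality {N K T : ℕ} (hK : K ≤ N)
    {G : Type*} [Fintype G] [Nonempty G] [DecidableEq G]
    (r : Fin T → Fin N → ℝ) (g : Fin N → G) (m : G → ℝ) (hm : ∀ a, 0 < m a)
    (hmTK : ∑ a, m a ≤ (T : ℝ) * K)
    (x : Fin T → Fin N → ℝ)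
    (hx01 : ∀ t i, x t i = 0 ∨ x t i = 1)
    (hxK : ∀ t, (∑ i, x t i) = (K : ℝ))
    (e : G → ℝ)
    (he : ∀ a, e a = ∑ t, ∑ i ∈ Finset.univ.filter (fun i => g i = a), x t i)
    (hem : ∀ a, m a ≤ e a)
    (heTK : (∑ a, e a) = (T : ℝ) * K)
    (μ : G → ℝ) :
    ∑ t, ∑ i, x t i * r t i ≤
      (∑ t, topK K hK (fun i => r t i - μ (g i))) + ∑ a, m a * μ a +
        (Finset.univ.sup' Finset.univ_nonempty μ) * ((T : ℝ) * K - ∑ a, m a) := by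
  classical
  set M := Finset.univ.sup' Finset.univ_nonempty μ with hM
  -- per-user top-K bound
  have key : ∀ t, ∑ i, x t i * (r t i - μ (g i)) ≤ topK K hK (fun i => r t i - μ (g i)) := by
    intro t
    set S := univ.filter (fun i => x t i = 1) with hS
    have hsum : ∀ (y : Fin N → ℝ), ∑ i, x t i * y i = ∑ i ∈ S, y i := by
      intro y
      rw [hS, Finset.sum_filter]
      apply Finset.sum_congr rfl
      intro i _
      rcases hx01 t i with h | h <;> simp [h]
    have hcard : S.card = K := by
      have h1 : ((K : ℕ) : ℝ) = (S.card : ℝ) := by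
        rw [← hxK t]
        calc ∑ i, x t i = ∑ i, x t i * 1 := by simp
          _ = ∑ i ∈ S, (1 : ℝ) := hsum _
          _ = (S.card : ℝ) := by simp
      exact_mod_cast h1.symm
    have hmem : S ∈ (univ : Finset (Fin N)).powersetCard K := by
      rw [Finset.mem_powersetCard]
      exact ⟨Finset.subset_univ _, hcard⟩
    rw [hsum]
    exact Finset.le_sup' (fun S => ∑ i ∈ S, (r t i - μ (g i))) hmem
  -- exposure identity
  have hexp : ∑ t, ∑ i, x t i * μ (g i) = ∑ a, e a * μ a := by
    have : ∀ t, ∑ i, x t i * μ (g i)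
        = ∑ a, ∑ i ∈ Finset.univ.filter (fun i => g i = a), x t i * μ a := by
      intro t
      rw [← Finset.sum_fiberwise univ g (fun i => x t i * μ (g i))]
      refine Finset.sum_congr rfl fun a _ => Finset.sum_congr rfl fun i hi => ?_
      rw [Finset.mem_filter] at hi
      rw [hi.2]
    simp only [this]
    rw [Finset.sum_comm]
    refine Finset.sum_congr rfl fun a _ => ?_
    rw [he a, Finset.sum_mul]
    refine Finset.sum_congr rfl fun t _ => ?_
    rw [Finset.sum_mul]
  have hμM : ∀ a : G, μ a ≤ M := fun a => Finset.le_sup' μ (Finset.mem_univ a)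
  have hexp_le : ∑ a, e a * μ a ≤ ∑ a, m a * μ a + M * ((T : ℝ) * K - ∑ a, m a) := by
    have step : ∀ a : G, e a * μ a ≤ m a * μ a + (e a - m a) * M := by
      intro a
      have h1 : (e a - m a) * μ a ≤ (e a - m a) * M :=
        mul_le_mul_of_nonneg_left (hμM a) (by linarith [hem a])
      nlinarith [h1]
    calc ∑ a, e a * μ a ≤ ∑ a, (m a * μ a + (e a - m a) * M) :=
          Finset.sum_le_sum fun a _ => step a
      _ = ∑ a, m a * μ a + M * ((T : ℝ) * K - ∑ a, m a) := by
          rw [Finset.sum_add_distrib]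
          congr 1
          rw [← Finset.sum_mul, Finset.sum_sub_distrib, heTK]
          ring
  calc ∑ t, ∑ i, x t i * r t i
      = ∑ t, ∑ i, (x t i * (r t i - μ (g i)) + x t i * μ (g i)) := by
        refine Finset.sum_congr rfl fun t _ => Finset.sum_congr rfl fun i _ => by ring
    _ = (∑ t, ∑ i, x t i * (r t i - μ (g i))) + ∑ t, ∑ i, x t i * μ (g i) := by
        simp [Finset.sum_add_distrib]
    _ ≤ (∑ t, topK K hK (fun i => r t i - μ (g i))) + ∑ a, e a * μ a := by
        rw [hexp]
        exact add_le_add_left (Finset.sum_le_sum fun t _ => key t) _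
    _ ≤ (∑ t, topK K hK (fun i => r t i - μ (g i))) +
          (∑ a, m a * μ a + M * ((T : ℝ) * K - ∑ a, m a)) := add_le_add_right hexp_le _
    _ = _ := by ring
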